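/- One has inf{ |log f(R e^{iθ})| : θ ∈ [0, π/2] } → ∞ as R → ∞; that is, the infimum over the quarter circle of the modulus of log f tends to infinity with the radius. -/

import Mathlib

open Complex Filter

/-- The holomorphic branch of `log f` on `ℂ ∖ (−∞,0]`:
`log f(z) = r·Log z + az² + bz + ∑_k (Log(1 + z/λ_k) − z/λ_k + z²/(2λ_k²))`. -/
noncomputable def genus2log (r : ℕ) (a b : ℝ) (lam : ℕ → ℝ) (z : ℂ) : ℂ :=
  (r : ℂ) * Complex.log z + (a : ℂ) * z ^ 2 + (b : ℂ) * z +
    ∑' k : ℕ, (Complex.log (1 + z / (lam k : ℂ)) - z / (lam k : ℂ) +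
      z ^ 2 / (2 * (lam k : ℂ) ^ 2))

lemma genus2_core (θ : ℝ) (hθ0 : 0 ≤ θ) (hθ1 : θ ≤ Real.pi / 2) {t : ℝ} (ht : 0 ≤ t) :
    max 0 (t ^ 2 / 2 - 2 * t) ≤ (Complex.exp (-(θ : ℂ) * I) ^ 2 *
      (Complex.log (1 + (t : ℂ) * Complex.exp ((θ : ℂ) * I)) - (t : ℂ) * Complex.exp ((θ : ℂ) * I)
        + ((t : ℂ) * Complex.exp ((θ : ℂ) * I)) ^ 2 / 2)).re := by
  set e : ℂ := Complex.exp ((θ : ℂ) * I) with he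
  set c : ℂ := Complex.exp (-(θ : ℂ) * I) ^ 2 with hc
  have hce : c * e ^ 2 = 1 := by
    rw [hc, he, ← mul_pow, ← Complex.exp_add]
    norm_num
  have hcos0 : 0 ≤ Real.cos θ := Real.cos_nonneg_of_mem_Icc ⟨by linarith [Real.pi_pos], hθ1⟩
  have hcos1 : Real.cos θ ≤ 1 := Real.cos_le_one θ
  have hsc : Real.sin θ ^ 2 + Real.cos θ ^ 2 = 1 := Real.sin_sq_add_cos_sq θ
  have here : e.re = Real.cos θ := by rw [he]; exact Complex.exp_ofReal_mul_I_re θ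
  have heim : e.im = Real.sin θ := by rw [he]; exact Complex.exp_ofReal_mul_I_im θ
  clear_value e c
  clear he hc
  set F : ℝ → ℝ := fun x : ℝ =>
    (c * (Complex.log (1 + (x : ℂ) * e) - (x : ℂ) * e + ((x : ℂ) * e) ^ 2 / 2)).re with hF
  set d : ℝ → ℝ := fun s : ℝ => s ^ 2 *
      ((Real.cos θ * (1 + s * Real.cos θ) + Real.sin θ * (s * Real.sin θ)) /
        ((1 + s * Real.cos θ) ^ 2 + (s * Real.sin θ) ^ 2)) with hd
  have hDen : ∀ s : ℝ, 0 ≤ s → 0 < (1 + s * Real.cos θ) ^ 2 + (s * Real.sin θ) ^ 2 := by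
    intro s hs
    have h1 : (1:ℝ) ≤ 1 + s * Real.cos θ := by nlinarith
    nlinarith [sq_nonneg (s * Real.sin θ)]
  have key : ∀ s : ℝ, 0 ≤ s → HasDerivAt F (d s) s := by
    intro s hs
    have hre : ((1 : ℂ) + (s : ℂ) * e).re = 1 + s * Real.cos θ := by
      simp [Complex.add_re, Complex.mul_re, Complex.ofReal_re, Complex.ofReal_im, here, heim]
    have him : ((1 : ℂ) + (s : ℂ) * e).im = s * Real.sin θ := by
      simp [Complex.add_im, Complex.mul_im, Complex.ofReal_re, Complex.ofReal_im, here, heim]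
    have hq : (1 + (s : ℂ) * e) ∈ Complex.slitPlane := by
      rw [Complex.mem_slitPlane_iff]
      left
      rw [hre]
      nlinarith
    have hqne : (1 : ℂ) + (s : ℂ) * e ≠ 0 := Complex.slitPlane_ne_zero hq
    have h1 : HasDerivAt (fun ζ : ℂ => Complex.log (1 + ζ * e)) ((1 + (s : ℂ) * e)⁻¹ * e) (s : ℂ) := by
      have := (Complex.hasDerivAt_log hq).comp (s : ℂ) ((hasDerivAt_mul_const e).const_add 1)
      exact this
    have h2 : HasDerivAt (fun ζ : ℂ => ζ * e) e (s : ℂ) := hasDerivAt_mul_const e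
    have h3 : HasDerivAt (fun ζ : ℂ => (ζ * e) ^ 2 / 2) ((s : ℂ) * e ^ 2) (s : ℂ) := by
      have := ((hasDerivAt_mul_const (x := (s:ℂ)) e).pow 2).div_const 2
      refine this.congr_deriv ?_
      push_cast
      ring
    have hE : HasDerivAt (fun ζ : ℂ => c * (Complex.log (1 + ζ * e) - ζ * e + (ζ * e) ^ 2 / 2))
        (c * ((1 + (s : ℂ) * e)⁻¹ * e - e + (s : ℂ) * e ^ 2)) (s : ℂ) :=
      ((h1.sub h2).add h3).const_mul c
    have hsimp : c * ((1 + (s : ℂ) * e)⁻¹ * e - e + (s : ℂ) * e ^ 2)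
        = ((s ^ 2 : ℝ) : ℂ) * (e / (1 + (s : ℂ) * e)) := by
      rw [← mul_div_assoc, eq_div_iff hqne]
      push_cast
      field_simp
      linear_combination (s : ℂ) ^ 2 * e * hce
    have hF' := hE.real_of_complex
    rw [hsimp] at hF'
    convert hF' using 1
    rw [Complex.re_ofReal_mul, Complex.div_re, hre, him, here, heim, Complex.normSq_apply,
      hre, him]
    rw [hd]
    ring
  have hF0 : F 0 = 0 := by
    simp [hF]
  have hd0 : ∀ s ∈ interior (Set.Ici (0:ℝ)), 0 ≤ deriv F s := by
    intro s hs
    rw [interior_Ici] at hs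
    rw [(key s hs.le).deriv]
    have hD := hDen s hs.le
    have hnum : 0 ≤ Real.cos θ * (1 + s * Real.cos θ) + Real.sin θ * (s * Real.sin θ) := by
      nlinarith [sq_nonneg (Real.sin θ), (Set.mem_Ioi.mp hs).le]
    rw [hd]
    positivity
  have hcont : ContinuousOn F (Set.Ici (0:ℝ)) :=
    fun x hx => ((key x hx).continuousAt).continuousWithinAt
  have hdiff : DifferentiableOn ℝ F (interior (Set.Ici (0:ℝ))) := by
    intro x hx
    rw [interior_Ici] at hx
    exact ((key x hx.le).differentiableAt).differentiableWithinAt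
  have mono1 : MonotoneOn F (Set.Ici (0:ℝ)) :=
    monotoneOn_of_deriv_nonneg (convex_Ici 0) hcont hdiff hd0
  have hFt0 : 0 ≤ F t := by
    have h := mono1 Set.self_mem_Ici (Set.mem_Ici.mpr ht) ht
    rwa [hF0] at h
  set G : ℝ → ℝ := fun x => F x - (x ^ 2 / 2 - 2 * x) with hG
  have keyG : ∀ s : ℝ, 0 ≤ s → HasDerivAt G (d s - (s - 2)) s := by
    intro s hs
    have hpoly : HasDerivAt (fun x : ℝ => x ^ 2 / 2 - 2 * x) (s - 2) s := by
      have h1 := (hasDerivAt_pow 2 s).div_const 2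
      have h2 := (hasDerivAt_id s).const_mul (2:ℝ)
      have h3 := h1.sub h2
      refine h3.congr_deriv ?_
      push_cast
      ring
    exact (key s hs).sub hpoly
  have hdG : ∀ s ∈ interior (Set.Ici (0:ℝ)), 0 ≤ deriv G s := by
    intro s hs
    rw [interior_Ici] at hs
    rw [(keyG s hs.le).deriv]
    have hD := hDen s hs.le
    have hs' := (Set.mem_Ioi.mp hs).le
    have h2 : s - 2 ≤ d s := by
      rw [hd]
      simp only []
      rw [mul_div_assoc', le_div_iff₀ hD]
      nlinarith [hsc, hcos0, hcos1, hs', sq_nonneg s, sq_nonneg (s - 1), sq_nonneg (2 * s - 1),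
        mul_nonneg hs' hcos0, sq_nonneg (s * Real.sin θ)]
    linarith
  have hcontG : ContinuousOn G (Set.Ici (0:ℝ)) :=
    fun x hx => ((keyG x hx).continuousAt).continuousWithinAt
  have hdiffG : DifferentiableOn ℝ G (interior (Set.Ici (0:ℝ))) := by
    intro x hx
    rw [interior_Ici] at hx
    exact ((keyG x hx.le).differentiableAt).differentiableWithinAt
  have mono2 : MonotoneOn G (Set.Ici (0:ℝ)) :=
    monotoneOn_of_deriv_nonneg (convex_Ici 0) hcontG hdiffG hdG
  have hGt : 0 ≤ G t := by
    have h := mono2 Set.self_mem_Ici (Set.mem_Ici.mpr ht) ht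
    have hG0 : G 0 = 0 := by simp [hG, hF0]
    rwa [hG0] at h
  have hFt2 : t ^ 2 / 2 - 2 * t ≤ F t := by
    have heq : G t = F t - (t ^ 2 / 2 - 2 * t) := rfl
    rw [heq] at hGt
    linarith
  exact max_le hFt0 hFt2

lemma genus2_logTaylor_three (w : ℂ) : Complex.logTaylor 3 w = w - w ^ 2 / 2 := by
  simp [Complex.logTaylor_succ, Complex.logTaylor_zero, Pi.add_apply]
  ring

lemma genus2_cube_bound {w : ℂ} (hw : ‖w‖ ≤ 1 / 2) :
    ‖Complex.log (1 + w) - w + w ^ 2 / 2‖ ≤ ‖w‖ ^ 3 := by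
  have h1 : ‖w‖ < 1 := by linarith
  have h := Complex.norm_log_sub_logTaylor_le 2 h1
  rw [genus2_logTaylor_three] at h
  have heq : Complex.log (1 + w) - w + w ^ 2 / 2 = Complex.log (1 + w) - (w - w ^ 2 / 2) := by
    ring
  rw [heq]
  refine h.trans ?_
  have h2 : (1 - ‖w‖)⁻¹ ≤ 2 := by
    rw [inv_le_comm₀ (by linarith) (by norm_num)]
    linarith
  have h3 : (0:ℝ) ≤ ‖w‖ ^ 3 := by positivity
  calc ‖w‖ ^ (2 + 1) * (1 - ‖w‖)⁻¹ / (2 + 1) ≤ ‖w‖ ^ 3 * 2 / 3 := by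
        have : ‖w‖ ^ (2+1) = ‖w‖ ^ 3 := rfl
        rw [this]
        gcongr
        norm_num
    _ ≤ ‖w‖ ^ 3 := by linarith

lemma genus2_lam_tendsto (lam : ℕ → ℝ) (hpos : ∀ k, 0 < lam k) (hmono : Monotone lam)
    (hsum : Summable (fun k => 1 / lam k ^ 3)) : Tendsto lam atTop atTop := by
  have h0 : Tendsto (fun k => 1 / lam k ^ 3) atTop (nhds 0) := hsum.tendsto_atTop_zero
  refine tendsto_atTop_atTop_of_monotone hmono ?_
  intro b
  have hb : (0:ℝ) < 1 / (max b 1) ^ 3 := by positivity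
  obtain ⟨k, hk⟩ := (h0.eventually (gt_mem_nhds hb)).exists
  refine ⟨k, ?_⟩
  have hlk := hpos k
  have hmb : (0:ℝ) < max b 1 := lt_of_lt_of_le one_pos (le_max_right _ _)
  have h3 : (max b 1) ^ 3 < lam k ^ 3 := by
    rw [one_div, one_div, inv_lt_inv₀ (by positivity) (by positivity)] at hk
    exact hk
  have := lt_of_pow_lt_pow_left₀ 3 hlk.le h3
  exact (le_max_left b 1).trans this.le

lemma genus2_summable (lam : ℕ → ℝ) (hpos : ∀ k, 0 < lam k) (hmono : Monotone lam)
    (hsum : Summable (fun k => 1 / lam k ^ 3)) (z : ℂ) :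
    Summable (fun k => Complex.log (1 + z / (lam k : ℂ)) - z / (lam k : ℂ) +
      z ^ 2 / (2 * (lam k : ℂ) ^ 2)) := by
  have hlam := genus2_lam_tendsto lam hpos hmono hsum
  apply Summable.of_norm_bounded_eventually_nat (g := fun k => ‖z‖ ^ 3 * (1 / lam k ^ 3))
    (hsum.mul_left _)
  filter_upwards [hlam.eventually_ge_atTop (2 * ‖z‖ + 1)] with k hk
  have hlk := hpos k
  have hzk : ‖z‖ ≤ lam k / 2 := by linarith
  have hne : (lam k : ℂ) ≠ 0 := by exact_mod_cast hlk.ne'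
  have hrew : z ^ 2 / (2 * (lam k : ℂ) ^ 2) = (z / (lam k : ℂ)) ^ 2 / 2 := by
    rw [div_pow, div_div, mul_comm]
  rw [hrew]
  have hwn : ‖z / (lam k : ℂ)‖ = ‖z‖ / lam k := by
    rw [norm_div, Complex.norm_real, Real.norm_eq_abs, abs_of_pos hlk]
  have hw : ‖z / (lam k : ℂ)‖ ≤ 1 / 2 := by
    rw [hwn, div_le_div_iff₀ hlk (by norm_num)]
    linarith
  refine (genus2_cube_bound hw).trans ?_
  rw [hwn, div_pow, one_div, mul_comm (‖z‖ ^ 3), inv_mul_eq_div]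

/-- The infimum of `|log f(R e^{iθ})|` over the quarter circle
`θ ∈ [0, π/2]` tends to infinity as `R → ∞`. -/
theorem genus2log_inf_quarter_circle_tendsto (r : ℕ) (a b : ℝ) (lam : ℕ → ℝ)
    (hpos : ∀ k, 0 < lam k) (hmono : Monotone lam)
    (hdiv : ¬ Summable (fun k => 1 / lam k ^ 2))
    (hsum : Summable (fun k => 1 / lam k ^ 3)) :
    Tendsto (fun R : ℝ =>
        ⨅ θ : Set.Icc (0 : ℝ) (Real.pi / 2),
          ‖genus2log r a b lam ((R : ℂ) * Complex.exp ((θ : ℝ) * I))‖)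
      atTop atTop := by
  have hpi2 : (0:ℝ) ≤ Real.pi / 2 := by positivity
  haveI : Nonempty (Set.Icc (0:ℝ) (Real.pi / 2)) := (Set.nonempty_Icc.mpr hpi2).to_subtype
  rw [tendsto_atTop]
  intro M
  have h2nn : ∀ k, 0 ≤ 1 / lam k ^ 2 := fun k => by positivity
  have hdiv' := (not_summable_iff_tendsto_nat_atTop_of_nonneg h2nn).mp hdiv
  obtain ⟨N, hN⟩ := (hdiv'.eventually_ge_atTop (8 * (|a| + 1))).exists
  have hlamN : 0 < lam N := hpos N
  filter_upwards [eventually_ge_atTop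
    (max (max 1 (8 * lam N)) (|b| + r + r * Real.pi + |M| + 1))] with R hR
  have hR1 : (1:ℝ) ≤ R := le_trans ((le_max_left _ _).trans (le_max_left _ _)) hR
  have hRlam : 8 * lam N ≤ R := le_trans ((le_max_right _ _).trans (le_max_left _ _)) hR
  have hRb : |b| + r + r * Real.pi + |M| + 1 ≤ R := le_trans (le_max_right _ _) hR
  have hRpos : (0:ℝ) < R := by linarith
  apply le_ciInf
  rintro ⟨θ, hθ0, hθ1⟩
  set e : ℂ := Complex.exp ((θ : ℂ) * I) with he
  set c : ℂ := Complex.exp (-(θ : ℂ) * I) ^ 2 with hc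
  set z : ℂ := (R : ℂ) * e with hz
  have hce : c * e ^ 2 = 1 := by
    rw [hc, he, ← mul_pow, ← Complex.exp_add]
    norm_num
  have habse : ‖e‖ = 1 := by
    rw [he, Complex.norm_exp]
    simp
  have habsc : ‖c‖ = 1 := by
    rw [hc, norm_pow, Complex.norm_exp]
    simp
  have hzabs : ‖z‖ = R := by
    rw [hz, norm_mul, habse, Complex.norm_real, Real.norm_eq_abs, abs_of_pos hRpos, mul_one]
  clear_value e c z
  -- summability
  have hS := genus2_summable lam hpos hmono hsum z
  have hsumre := Complex.hasSum_re ((hS.hasSum).mul_left c)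
  -- rewriting of the k-th term
  have hd1 : ∀ k : ℕ, z / (lam k : ℂ) = ((R / lam k : ℝ) : ℂ) * e := by
    intro k
    have hne : (lam k : ℂ) ≠ 0 := by exact_mod_cast (hpos k).ne'
    rw [hz]
    push_cast
    field_simp
  have hd2 : ∀ k : ℕ, z ^ 2 / (2 * (lam k : ℂ) ^ 2) = (((R / lam k : ℝ) : ℂ) * e) ^ 2 / 2 := by
    intro k
    rw [show z ^ 2 / (2 * (lam k : ℂ) ^ 2) = (z / (lam k : ℂ)) ^ 2 / 2 from by
      rw [div_pow, div_div, mul_comm], hd1 k]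
  have hcore : ∀ k : ℕ, max 0 ((R / lam k) ^ 2 / 2 - 2 * (R / lam k)) ≤
      (c * (Complex.log (1 + z / (lam k : ℂ)) - z / (lam k : ℂ) +
        z ^ 2 / (2 * (lam k : ℂ) ^ 2))).re := by
    intro k
    rw [hd1 k, hd2 k, hc, he]
    exact genus2_core θ hθ0 hθ1 (div_nonneg hRpos.le (hpos k).le)
  have hnn : ∀ k : ℕ, 0 ≤ (c * (Complex.log (1 + z / (lam k : ℂ)) - z / (lam k : ℂ) +
      z ^ 2 / (2 * (lam k : ℂ) ^ 2))).re :=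
    fun k => le_trans (le_max_left _ _) (hcore k)
  have hbig : ∀ k ∈ Finset.range N, R ^ 2 / 4 * (1 / lam k ^ 2) ≤
      (c * (Complex.log (1 + z / (lam k : ℂ)) - z / (lam k : ℂ) +
        z ^ 2 / (2 * (lam k : ℂ) ^ 2))).re := by
    intro k hk
    have hkN : lam k ≤ lam N := hmono (Finset.mem_range.mp hk).le
    have hlk := hpos k
    have ht8 : 8 ≤ R / lam k := by
      rw [le_div_iff₀ hlk]
      linarith
    refine le_trans ?_ (le_trans (le_max_right _ _) (hcore k))
    have ht : R / lam k = R / lam k := rfl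
    have h1 : R ^ 2 / 4 * (1 / lam k ^ 2) = (R / lam k) ^ 2 / 4 := by
      field_simp
    rw [h1]
    nlinarith [ht8]
  -- bound for the tsum part
  have htsum : 2 * (|a| + 1) * R ^ 2 ≤ (c * ∑' k : ℕ,
      (Complex.log (1 + z / (lam k : ℂ)) - z / (lam k : ℂ) +
        z ^ 2 / (2 * (lam k : ℂ) ^ 2))).re := by
    rw [← hsumre.tsum_eq]
    have hstep : 2 * (|a| + 1) * R ^ 2 ≤
        ∑ i ∈ Finset.range N, (c * (Complex.log (1 + z / (lam i : ℂ)) - z / (lam i : ℂ) +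
          z ^ 2 / (2 * (lam i : ℂ) ^ 2))).re := by
      have hs1 : R ^ 2 / 4 * (8 * (|a| + 1)) ≤ R ^ 2 / 4 * ∑ i ∈ Finset.range N, 1 / lam i ^ 2 :=
        mul_le_mul_of_nonneg_left hN (by positivity)
      rw [Finset.mul_sum] at hs1
      have hs2 := Finset.sum_le_sum hbig
      have heq : 2 * (|a| + 1) * R ^ 2 = R ^ 2 / 4 * (8 * (|a| + 1)) := by ring
      rw [heq]
      exact hs1.trans hs2
    exact hstep.trans (Summable.sum_le_tsum (Finset.range N) (fun k _ => hnn k) hsumre.summable)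
  -- log term bound
  have hlogz : ‖Complex.log z‖ ≤ Real.log R + Real.pi := by
    refine (Complex.norm_le_abs_re_add_abs_im _).trans ?_
    rw [Complex.log_re, Complex.log_im, hzabs]
    have h1 : |Real.log R| = Real.log R := abs_of_nonneg (Real.log_nonneg hR1)
    have h2 := Complex.abs_arg_le_pi z
    rw [h1]
    linarith
  have hterm1 : -(r * (Real.log R + Real.pi)) ≤ (c * ((r : ℂ) * Complex.log z)).re := by
    have h1 : ‖c * ((r : ℂ) * Complex.log z)‖ ≤ r * (Real.log R + Real.pi) := by
      rw [norm_mul, habsc, one_mul, norm_mul]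
      have : ‖(r : ℂ)‖ = (r : ℝ) := by
        rw [Complex.norm_natCast]
      rw [this]
      exact mul_le_mul_of_nonneg_left hlogz (Nat.cast_nonneg r)
    have h2 := (abs_le.1 (Complex.abs_re_le_norm (c * ((r : ℂ) * Complex.log z)))).1
    linarith
  have hterm2 : (c * ((a : ℂ) * z ^ 2)).re = a * R ^ 2 := by
    have h1 : c * ((a : ℂ) * z ^ 2) = ((a * R ^ 2 : ℝ) : ℂ) := by
      rw [hz]
      push_cast
      linear_combination ((a : ℂ) * (R : ℂ) ^ 2) * hce
    rw [h1, Complex.ofReal_re]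
  have hterm3 : -(|b| * R) ≤ (c * ((b : ℂ) * z)).re := by
    have h1 : ‖c * ((b : ℂ) * z)‖ = |b| * R := by
      rw [norm_mul, habsc, one_mul, norm_mul, hzabs, Complex.norm_real, Real.norm_eq_abs]
    have h2 := (abs_le.1 (Complex.abs_re_le_norm (c * ((b : ℂ) * z)))).1
    linarith
  -- put everything together
  have hre_le : (c * genus2log r a b lam z).re ≤ ‖genus2log r a b lam z‖ := by
    refine (Complex.re_le_norm _).trans ?_
    rw [norm_mul, habsc, one_mul]
  refine le_trans ?_ hre_le
  rw [genus2log]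
  rw [mul_add, mul_add, mul_add, Complex.add_re, Complex.add_re, Complex.add_re]
  have hlogR : Real.log R ≤ R - 1 := Real.log_le_sub_one_of_pos hRpos
  have hπ : (0:ℝ) < Real.pi := Real.pi_pos
  have habsa : -|a| ≤ a := neg_abs_le a
  have habsM : M ≤ |M| := le_abs_self M
  have hr0 : (0:ℝ) ≤ (r:ℝ) := Nat.cast_nonneg r
  have f1 : R * (|b| + (r:ℝ) + (r:ℝ) * Real.pi + |M| + 1) ≤ R * R :=
    mul_le_mul_of_nonneg_left hRb hRpos.le
  have f2 : (r:ℝ) * Real.log R ≤ (r:ℝ) * (R - 1) := mul_le_mul_of_nonneg_left hlogR hr0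
  have f3 : -|a| * R ^ 2 ≤ a * R ^ 2 := mul_le_mul_of_nonneg_right habsa (sq_nonneg R)
  have f4 : (0:ℝ) ≤ (R - 1) * ((r:ℝ) * Real.pi) :=
    mul_nonneg (by linarith) (mul_nonneg hr0 hπ.le)
  have f5 : (0:ℝ) ≤ (R - 1) * |M| := mul_nonneg (by linarith) (abs_nonneg M)
  have f6 : (0:ℝ) ≤ |a| * R ^ 2 := by positivity
  have harith : M ≤ -(r * (Real.log R + Real.pi)) + a * R ^ 2 + -(|b| * R)
      + 2 * (|a| + 1) * R ^ 2 := by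
    nlinarith [f1, f2, f3, f4, f5, f6, habsM, sq_nonneg R, hRpos.le, hπ.le, hr0]
  linarith [hterm1, hterm2, hterm3, htsum, harith]
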